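/- Let u be a minimizer of F_H^{con} and let D=D(u). Then there exist vectors β_k∈argmax_{b∈B_k}⟨b,u⟩, k=1,…,m, such that for every x_i∈D∖L: Σ_{k : x_i∈e_k} w_k·|β_k(x_i)|·φ_p( max_{x_j∈e_k∩D}u(x_j) + min_{x_j∈e_k∩D}u(x_j) − 2u(x_i) ) = 0, where φ_p(s)=|s|^{p−2}s for s≠0 and φ_p(0)=0. -/

import Mathlib

open Finset

/-- A finite hypergraph on vertex set `V` with `m` hyperedges:
each hyperedge is a nonempty finite set of vertices and carries a positive weight. -/
structure WeightedHypergraph (V : Type*) [Fintype V] (m : ℕ) where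
  e : Fin m → Finset V
  w : Fin m → ℝ
  e_nonempty : ∀ k, (e k).Nonempty
  w_pos : ∀ k, 0 < w k

variable {V : Type*} [Fintype V] {m : ℕ}

/-- Maximal oscillation of `u` on the hyperedge `e k`:
`max_{x_i, x_j ∈ e_k} |u x_i - u x_j|`. -/
noncomputable def osc (H : WeightedHypergraph V m) (u : V → ℝ) (k : Fin m) : ℝ :=
  (H.e k ×ˢ H.e k).sup' ((H.e_nonempty k).product (H.e_nonempty k))
    (fun q => |u q.1 - u q.2|)

/-- The hypergraph p-Laplacian regularizer
`F_H(u) = ∑ k w_k (max_{x_i,x_j ∈ e_k} |u x_i - u x_j|)^p`. -/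
noncomputable def FH (H : WeightedHypergraph V m) (p : ℝ) (u : V → ℝ) : ℝ :=
  ∑ k : Fin m, H.w k * (osc H u k) ^ p

/-- `u` is admissible for the labeled set `L` with labels `y`. -/
def Admissible (L : Finset V) (y u : V → ℝ) : Prop := ∀ x ∈ L, u x = y x

/-- `u` is a minimizer of the constrained functional `F_H^{con}`. -/
def IsMinimizer (H : WeightedHypergraph V m) (p : ℝ) (L : Finset V) (y u : V → ℝ) : Prop :=
  Admissible L y u ∧ ∀ v : V → ℝ, Admissible L y v → FH H p u ≤ FH H p v

/-- Connectivity of a hypergraph: any two vertices are linked by a chain of hyperedges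
with consecutive nonempty intersections. -/
def WeightedHypergraph.Connected [DecidableEq V] (H : WeightedHypergraph V m) : Prop :=
  ∀ x y : V, ∃ l : ℕ, ∃ ks : Fin (l + 1) → Fin m,
    x ∈ H.e (ks 0) ∧ y ∈ H.e (ks (Fin.last l)) ∧
    ∀ i : Fin l, (H.e (ks i.castSucc) ∩ H.e (ks i.succ)).Nonempty

/-- The set `D(u)` of vertices whose values are rigid: labeled vertices together with the
unlabeled vertices at which every sufficiently small perturbation strictly increases `F_H`. -/
def Dset [DecidableEq V] (H : WeightedHypergraph V m) (p : ℝ) (L : Finset V) (u : V → ℝ) : Set V :=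
  {x | x ∈ L ∨ (x ∉ L ∧ ∃ δ > (0 : ℝ), ∀ ε : ℝ, 0 < |ε| → |ε| < δ →
    FH H p u < FH H p (Function.update u x (u x + ε)))}

/-- φ_p(s) = |s|^{p-2} s for s ≠ 0 and φ_p(0) = 0. -/
noncomputable def phiP (p s : ℝ) : ℝ := if s = 0 then 0 else |s| ^ (p - 2) * s

/-- The simplified hypergraph p-Laplacian operator. -/
noncomputable def LpH [DecidableEq V] (H : WeightedHypergraph V m) (p : ℝ) (u : V → ℝ) (x : V) : ℝ :=
  ∑ k ∈ Finset.univ.filter (fun k => x ∈ H.e k),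
    H.w k * phiP p ((H.e k).sup' (H.e_nonempty k) u + (H.e k).inf' (H.e_nonempty k) u - 2 * u x)

/-- The indicator vector `𝟙_x ∈ ℝ^V`. -/
def ind [DecidableEq V] (x : V) : V → ℝ := fun z => if z = x then 1 else 0

/-- Euclidean inner product on `ℝ^V`. -/
noncomputable def ip (b u : V → ℝ) : ℝ := ∑ x : V, b x * u x

/-- `B_e = conv {𝟙_{x_i} - 𝟙_{x_j} : x_i, x_j ∈ e}`. -/
def Bset [DecidableEq V] (e : Finset V) : Set (V → ℝ) :=
  convexHull ℝ {b | ∃ xi ∈ e, ∃ xj ∈ e, b = ind xi - ind xj}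

/-! ### Auxiliary lemmas -/

section Aux

variable {V : Type*} [Fintype V] {m : ℕ}

lemma osc_eq_sup_sub_inf (H : WeightedHypergraph V m) (u : V → ℝ) (k : Fin m) :
    osc H u k = (H.e k).sup' (H.e_nonempty k) u - (H.e k).inf' (H.e_nonempty k) u := by
  apply le_antisymm
  · apply Finset.sup'_le
    rintro ⟨a, b⟩ hab
    rw [Finset.mem_product] at hab
    rw [abs_sub_le_iff]
    constructor
    · linarith [Finset.le_sup' u hab.1, Finset.inf'_le u hab.2]
    · linarith [Finset.le_sup' u hab.2, Finset.inf'_le u hab.1]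
  · obtain ⟨a, ha, hae⟩ := Finset.exists_mem_eq_sup' (H.e_nonempty k) u
    obtain ⟨b, hb, hbe⟩ := Finset.exists_mem_eq_inf' (H.e_nonempty k) u
    calc (H.e k).sup' (H.e_nonempty k) u - (H.e k).inf' (H.e_nonempty k) u
        = u a - u b := by rw [hae, hbe]
      _ ≤ |u a - u b| := le_abs_self _
      _ ≤ osc H u k := Finset.le_sup' (fun q : V × V => |u q.1 - u q.2|)
          (show ((a, b) : V × V) ∈ H.e k ×ˢ H.e k from Finset.mem_product.mpr ⟨ha, hb⟩)

lemma osc_nonneg (H : WeightedHypergraph V m) (u : V → ℝ) (k : Fin m) : 0 ≤ osc H u k := by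
  rw [osc_eq_sup_sub_inf]
  obtain ⟨a, ha⟩ := H.e_nonempty k
  have h1 := Finset.le_sup' u ha
  have h2 := Finset.inf'_le u ha
  linarith

lemma osc_congr (H : WeightedHypergraph V m) {u v : V → ℝ} (k : Fin m)
    (h : ∀ z ∈ H.e k, u z = v z) : osc H u k = osc H v k := by
  unfold osc
  apply Finset.sup'_congr _ rfl
  rintro ⟨a, b⟩ hab
  rw [Finset.mem_product] at hab
  rw [h a hab.1, h b hab.2]

lemma osc_update_not_mem [DecidableEq V] (H : WeightedHypergraph V m) (u : V → ℝ) (k : Fin m) {z : V} (hz : z ∉ H.e k)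
    (t : ℝ) : osc H (Function.update u z t) k = osc H u k := by
  apply osc_congr
  intro w hw
  exact Function.update_of_ne (by rintro rfl; exact hz hw) _ _

end Aux

section Aux2

variable {V : Type*} [Fintype V] [DecidableEq V] {m : ℕ}

lemma erase_nonempty_of_osc_pos (H : WeightedHypergraph V m) (u : V → ℝ) (k : Fin m)
    (h : 0 < osc H u k) {z : V} (hz : z ∈ H.e k) : ((H.e k).erase z).Nonempty := by
  by_contra hne
  rw [Finset.not_nonempty_iff_eq_empty] at hne
  have hsing : H.e k = {z} := by
    apply Finset.eq_singleton_iff_unique_mem.mpr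
    refine ⟨hz, fun w hw => ?_⟩
    by_contra hwz
    exact absurd (Finset.mem_erase.mpr ⟨hwz, hw⟩) (by simp [hne])
  rw [osc_eq_sup_sub_inf] at h
  have h1 : (H.e k).sup' (H.e_nonempty k) u = u z := by
    rw [show (H.e k).sup' (H.e_nonempty k) u = ({z} : Finset V).sup' ⟨z, Finset.mem_singleton_self z⟩ u by congr 1 <;> rw [hsing]]
    simp
  have h2 : (H.e k).inf' (H.e_nonempty k) u = u z := by
    rw [show (H.e k).inf' (H.e_nonempty k) u = ({z} : Finset V).inf' ⟨z, Finset.mem_singleton_self z⟩ u by congr 1 <;> rw [hsing]]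
    simp
  rw [h1, h2] at h
  linarith

lemma sup'_update_eq (e : Finset V) {z : V} (hz : z ∈ e) (hne : (e.erase z).Nonempty)
    (u : V → ℝ) (t : ℝ) :
    e.sup' ⟨z, hz⟩ (Function.update u z t) = max t ((e.erase z).sup' hne u) := by
  have he : e = insert z (e.erase z) := (Finset.insert_erase hz).symm
  have h1 : e.sup' ⟨z, hz⟩ (Function.update u z t)
      = (insert z (e.erase z)).sup' (by rw [← he]; exact ⟨z, hz⟩) (Function.update u z t) := by
    congr 1 <;> rw [← he]
  rw [h1, Finset.sup'_insert hne]
  have h2 : (e.erase z).sup' hne (Function.update u z t) = (e.erase z).sup' hne u :=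
    Finset.sup'_congr hne rfl (fun a ha => Function.update_of_ne (Finset.ne_of_mem_erase ha) _ _)
  rw [h2, Function.update_self]

lemma inf'_update_eq (e : Finset V) {z : V} (hz : z ∈ e) (hne : (e.erase z).Nonempty)
    (u : V → ℝ) (t : ℝ) :
    e.inf' ⟨z, hz⟩ (Function.update u z t) = min t ((e.erase z).inf' hne u) := by
  have he : e = insert z (e.erase z) := (Finset.insert_erase hz).symm
  have h1 : e.inf' ⟨z, hz⟩ (Function.update u z t)
      = (insert z (e.erase z)).inf' (by rw [← he]; exact ⟨z, hz⟩) (Function.update u z t) := by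
    congr 1 <;> rw [← he]
  rw [h1, Finset.inf'_insert hne]
  have h2 : (e.erase z).inf' hne (Function.update u z t) = (e.erase z).inf' hne u :=
    Finset.inf'_congr hne rfl (fun a ha => Function.update_of_ne (Finset.ne_of_mem_erase ha) _ _)
  rw [h2, Function.update_self]

/-- Exact affine formula for the oscillation after a small nonnegative perturbation at `z`. -/
lemma osc_update_eq (H : WeightedHypergraph V m) (u : V → ℝ) (k : Fin m) {z : V} (hz : z ∈ H.e k)
    (hne : ((H.e k).erase z).Nonempty) {t : ℝ} (ht : 0 ≤ t)
    (h1 : u z < ((H.e k).erase z).sup' hne u → u z + t < ((H.e k).erase z).sup' hne u)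
    (h2 : u z < ((H.e k).erase z).inf' hne u → u z + t < ((H.e k).erase z).inf' hne u) :
    osc H (Function.update u z (u z + t)) k =
      (if ((H.e k).erase z).sup' hne u ≤ u z then u z + t else ((H.e k).erase z).sup' hne u)
      - (if u z < ((H.e k).erase z).inf' hne u then u z + t
         else ((H.e k).erase z).inf' hne u) := by
  rw [osc_eq_sup_sub_inf]
  have hs : (H.e k).sup' (H.e_nonempty k) (Function.update u z (u z + t))
      = (H.e k).sup' ⟨z, hz⟩ (Function.update u z (u z + t)) := rfl
  have hi : (H.e k).inf' (H.e_nonempty k) (Function.update u z (u z + t))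
      = (H.e k).inf' ⟨z, hz⟩ (Function.update u z (u z + t)) := rfl
  rw [hs, hi, sup'_update_eq _ hz hne, inf'_update_eq _ hz hne]
  congr 1
  · by_cases hc : ((H.e k).erase z).sup' hne u ≤ u z
    · simp only [if_pos hc]
      exact max_eq_left (by linarith)
    · simp only [if_neg hc]
      push_neg at hc
      exact max_eq_right (le_of_lt (h1 hc))
  · by_cases hc : u z < ((H.e k).erase z).inf' hne u
    · simp only [if_pos hc]
      exact min_eq_left (le_of_lt (h2 hc))
    · simp only [if_neg hc]
      push_neg at hc
      exact min_eq_right (by linarith)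

lemma osc_neg (H : WeightedHypergraph V m) (u : V → ℝ) (k : Fin m) : osc H (-u) k = osc H u k := by
  unfold osc
  apply Finset.sup'_congr _ rfl
  intro q _
  show |(-u) q.1 - (-u) q.2| = _
  simp only [Pi.neg_apply]
  rw [show -u q.1 - -u q.2 = -(u q.1 - u q.2) by ring, abs_neg]

lemma FH_neg (H : WeightedHypergraph V m) (p : ℝ) (u : V → ℝ) : FH H p (-u) = FH H p u := by
  unfold FH
  exact Finset.sum_congr rfl (fun k _ => by rw [osc_neg])

lemma update_neg (u : V → ℝ) (z : V) (t : ℝ) :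
    Function.update (-u) z t = -(Function.update u z (-t)) := by
  funext w
  by_cases hw : w = z
  · subst hw; simp
  · simp [Function.update_of_ne hw]

lemma isMinimizer_neg {H : WeightedHypergraph V m} {p : ℝ} {L : Finset V} {y u : V → ℝ}
    (hu : IsMinimizer H p L y u) : IsMinimizer H p L (-y) (-u) := by
  constructor
  · intro x hx
    simp [hu.1 x hx]
  · intro v hv
    rw [FH_neg]
    have : Admissible L y (-v) := by
      intro x hx
      have := hv x hx
      simp only [Pi.neg_apply] at this ⊢
      linarith
    calc FH H p u ≤ FH H p (-v) := hu.2 _ this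
      _ = FH H p v := FH_neg _ _ _

lemma Dset_neg (H : WeightedHypergraph V m) (p : ℝ) (L : Finset V) (u : V → ℝ) :
    Dset H p L (-u) = Dset H p L u := by
  have key : ∀ w : V → ℝ, ∀ x ∉ L,
      ((∃ δ > (0 : ℝ), ∀ ε : ℝ, 0 < |ε| → |ε| < δ →
        FH H p w < FH H p (Function.update w x (w x + ε))) →
      (∃ δ > (0 : ℝ), ∀ ε : ℝ, 0 < |ε| → |ε| < δ →
        FH H p (-w) < FH H p (Function.update (-w) x ((-w) x + ε)))) := by
    intro w x _ ⟨δ, hδ, hcond⟩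
    refine ⟨δ, hδ, fun ε hε1 hε2 => ?_⟩
    have : Function.update (-w) x ((-w) x + ε) = -(Function.update w x (w x + (-ε))) := by
      rw [show (-w) x + ε = -(w x + (-ε)) by simp only [Pi.neg_apply]; ring, update_neg, neg_neg]
    rw [this, FH_neg, FH_neg]
    exact hcond (-ε) (by rwa [abs_neg]) (by rwa [abs_neg])
  ext x
  simp only [Dset, Set.mem_setOf_eq]
  constructor
  · rintro (h | ⟨hxL, hc⟩)
    · exact Or.inl h
    · refine Or.inr ⟨hxL, ?_⟩
      have := key (-u) x hxL (by simpa using hc)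
      simpa using this
  · rintro (h | ⟨hxL, hc⟩)
    · exact Or.inl h
    · exact Or.inr ⟨hxL, key u x hxL hc⟩

lemma sup'_neg (e : Finset V) (he : e.Nonempty) (u : V → ℝ) :
    e.sup' he (-u) = -(e.inf' he u) := by
  apply le_antisymm
  · apply Finset.sup'_le
    intro a ha
    simp only [Pi.neg_apply, neg_le_neg_iff]
    exact Finset.inf'_le u ha
  · obtain ⟨a, ha, hae⟩ := Finset.exists_mem_eq_inf' he u
    rw [hae]
    calc -(u a) = (-u) a := by simp
      _ ≤ _ := Finset.le_sup' _ ha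

lemma inf'_neg (e : Finset V) (he : e.Nonempty) (u : V → ℝ) :
    e.inf' he (-u) = -(e.sup' he u) := by
  have := sup'_neg e he (-u)
  simp only [neg_neg] at this
  have h2 : e.inf' he (- -u) = e.inf' he u := by simp
  linarith [sup'_neg e he u, h2]

end Aux2

section Aux3

variable {V : Type*} [Fintype V] [DecidableEq V] {m : ℕ}

lemma osc_of_erase_empty (H : WeightedHypergraph V m) (u0 : V → ℝ) (k : Fin m) {z : V}
    (hz : z ∈ H.e k) (h : (H.e k).erase z = ∅) : osc H u0 k = 0 := by
  have hsing : H.e k = {z} := by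
    apply Finset.eq_singleton_iff_unique_mem.mpr
    refine ⟨hz, fun w hw => ?_⟩
    by_contra hwz
    exact absurd (Finset.mem_erase.mpr ⟨hwz, hw⟩) (by simp [h])
  rw [osc_eq_sup_sub_inf]
  have h1 : (H.e k).sup' (H.e_nonempty k) u0
      = ({z} : Finset V).sup' ⟨z, Finset.mem_singleton_self z⟩ u0 := by congr 1 <;> rw [hsing]
  have h2 : (H.e k).inf' (H.e_nonempty k) u0
      = ({z} : Finset V).inf' ⟨z, Finset.mem_singleton_self z⟩ u0 := by congr 1 <;> rw [hsing]
  rw [h1, h2]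
  simp

lemma admissible_update {L : Finset V} {y u : V → ℝ} (hadm : Admissible L y u) {z : V}
    (hz : z ∉ L) (t : ℝ) : Admissible L y (Function.update u z t) := by
  intro x hx
  rw [Function.update_of_ne (by rintro rfl; exact hz hx)]
  exact hadm x hx

lemma exists_gap (u : V → ℝ) : ∃ γ > (0:ℝ), ∀ a b : V, u a ≠ u b → γ ≤ |u a - u b| := by
  set T : Finset ℝ :=
    (Finset.univ ×ˢ Finset.univ).filter (fun q : V × V => u q.1 ≠ u q.2) |>.image
      (fun q : V × V => |u q.1 - u q.2|) with hT
  by_cases hne : T.Nonempty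
  · refine ⟨T.min' hne, ?_, ?_⟩
    · obtain ⟨r, hr, hrval⟩ := Finset.mem_image.mp (T.min'_mem hne)
      rw [← hrval]
      rw [Finset.mem_filter] at hr
      exact abs_pos.mpr (sub_ne_zero.mpr hr.2)
    · intro a b hab
      apply Finset.min'_le
      rw [hT]
      apply Finset.mem_image.mpr
      exact ⟨(a, b), Finset.mem_filter.mpr ⟨by simp, hab⟩, rfl⟩
  · refine ⟨1, one_pos, fun a b hab => ?_⟩
    exfalso
    apply hne
    exact ⟨|u a - u b|, Finset.mem_image.mpr ⟨(a, b), Finset.mem_filter.mpr ⟨by simp, hab⟩, rfl⟩⟩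

lemma rpow_midpoint_le {p A B : ℝ} (hA : 0 ≤ A) (hB : 0 ≤ B) (hp : 1 ≤ p) :
    ((A + B) / 2) ^ p ≤ (A ^ p + B ^ p) / 2 := by
  have h := (convexOn_rpow hp).2 (Set.mem_Ici.mpr hA) (Set.mem_Ici.mpr hB)
    (by norm_num : (0:ℝ) ≤ 1/2) (by norm_num : (0:ℝ) ≤ 1/2) (by norm_num)
  simp only [smul_eq_mul] at h
  calc ((A + B) / 2) ^ p = (1/2 * A + 1/2 * B) ^ p := by ring_nf
    _ ≤ 1/2 * A ^ p + 1/2 * B ^ p := h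
    _ = (A ^ p + B ^ p) / 2 := by ring

lemma rpow_midpoint_lt {p A B : ℝ} (hA : 0 ≤ A) (hB : 0 ≤ B) (hAB : A ≠ B) (hp : 1 < p) :
    ((A + B) / 2) ^ p < (A ^ p + B ^ p) / 2 := by
  have h := (strictConvexOn_rpow hp).2 (Set.mem_Ici.mpr hA) (Set.mem_Ici.mpr hB) hAB
    (by norm_num : (0:ℝ) < 1/2) (by norm_num : (0:ℝ) < 1/2) (by norm_num)
  simp only [smul_eq_mul] at h
  calc ((A + B) / 2) ^ p = (1/2 * A + 1/2 * B) ^ p := by ring_nf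
    _ < 1/2 * A ^ p + 1/2 * B ^ p := h
    _ = (A ^ p + B ^ p) / 2 := by ring

/-- Core rigidity step: if moving `z` up by a small `ε > 0` does not change `F_H`, then in
every hyperedge containing `z` (and another vertex), `z` is neither a maximizer nor a
strict minimizer. -/
lemma rigidity_step (H : WeightedHypergraph V m) {p : ℝ} (hp : 1 < p) {L : Finset V} {y u : V → ℝ}
    (hu : IsMinimizer H p L y u) {z : V} (hzL : z ∉ L) {ε γ : ℝ} (hε : 0 < ε)
    (hγ : ∀ a b : V, u a ≠ u b → γ ≤ |u a - u b|) (hεγ : ε < γ)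
    (heq : FH H p (Function.update u z (u z + ε)) = FH H p u) :
    ∀ k : Fin m, z ∈ H.e k → ∀ hne : ((H.e k).erase z).Nonempty,
      u z < ((H.e k).erase z).sup' hne u ∧ ((H.e k).erase z).inf' hne u ≤ u z := by
  have hp0 : (0:ℝ) < p := by linarith
  have hmid : FH H p u ≤ FH H p (Function.update u z (u z + ε/2)) :=
    hu.2 _ (admissible_update hu.1 hzL _)
  -- the exact oscillation formula for all edges and small nonnegative t
  have hosc : ∀ j : Fin m, ∀ hzj : z ∈ H.e j, ∀ hne : ((H.e j).erase z).Nonempty,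
      ∀ t : ℝ, 0 ≤ t → t ≤ ε →
      osc H (Function.update u z (u z + t)) j =
        (if ((H.e j).erase z).sup' hne u ≤ u z then u z + t
          else ((H.e j).erase z).sup' hne u)
        - (if u z < ((H.e j).erase z).inf' hne u then u z + t
          else ((H.e j).erase z).inf' hne u) := by
    intro j hzj hne t ht htε
    apply osc_update_eq H u j hzj hne ht
    · intro hlt
      obtain ⟨a, ha, hae⟩ := Finset.exists_mem_eq_sup' hne u
      rw [hae] at hlt ⊢
      have hthis : γ ≤ |u a - u z| := hγ a z (ne_of_gt hlt)
      rw [abs_of_pos (by linarith)] at hthis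
      linarith
    · intro hlt
      obtain ⟨a, ha, hae⟩ := Finset.exists_mem_eq_inf' hne u
      rw [hae] at hlt ⊢
      have hthis : γ ≤ |u a - u z| := hγ a z (ne_of_gt hlt)
      rw [abs_of_pos (by linarith)] at hthis
      linarith
  have hosc0 : ∀ j : Fin m, ∀ hzj : z ∈ H.e j, ∀ hne : ((H.e j).erase z).Nonempty,
      osc H u j =
        (if ((H.e j).erase z).sup' hne u ≤ u z then u z
          else ((H.e j).erase z).sup' hne u)
        - (if u z < ((H.e j).erase z).inf' hne u then u z
          else ((H.e j).erase z).inf' hne u) := by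
    intro j hzj hne
    have := hosc j hzj hne 0 le_rfl (le_of_lt hε)
    simpa using this
  -- termwise convexity
  have key : ∀ j : Fin m,
      H.w j * (osc H (Function.update u z (u z + ε/2)) j) ^ p ≤
      (H.w j * (osc H u j) ^ p + H.w j * (osc H (Function.update u z (u z + ε)) j) ^ p) / 2 := by
    intro j
    by_cases hzj : z ∈ H.e j
    · by_cases hne : ((H.e j).erase z).Nonempty
      · have h0 := hosc0 j hzj hne
        have hh := hosc j hzj hne (ε/2) (by linarith) (by linarith)
        have h1 := hosc j hzj hne ε (le_of_lt hε) le_rfl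
        set Mz := ((H.e j).erase z).sup' hne u with hMset
        set mz := ((H.e j).erase z).inf' hne u with hmset
        have hMm : mz ≤ Mz := by
          obtain ⟨a, ha⟩ := hne
          exact le_trans (Finset.inf'_le u ha) (Finset.le_sup' u ha)
        rw [h0, hh, h1]
        have hw := le_of_lt (H.w_pos j)
        split_ifs with hc1 hc2
        · simp only [sub_self]
          linarith
        · -- s = 1 : values uz - mz, uz + ε/2 - mz, uz + ε - mz
          push_neg at hc2
          have hkey := rpow_midpoint_le (A := u z - mz) (B := u z + ε - mz)
            (by linarith) (by linarith) (le_of_lt hp)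
          have harg : (u z + ε/2 - mz) = ((u z - mz) + (u z + ε - mz)) / 2 := by ring
          rw [harg]
          calc H.w j * (((u z - mz) + (u z + ε - mz)) / 2) ^ p
              ≤ H.w j * (((u z - mz) ^ p + (u z + ε - mz) ^ p) / 2) :=
                mul_le_mul_of_nonneg_left hkey hw
            _ = (H.w j * (u z - mz) ^ p + H.w j * (u z + ε - mz) ^ p) / 2 := by ring
        · -- s = -1 : values Mz - uz, Mz - uz - ε/2, Mz - uz - ε
          push_neg at hc1
          have hεM : u z + ε < Mz := by
            obtain ⟨a, ha, hae⟩ := Finset.exists_mem_eq_sup' hne u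
            have haM : u a = Mz := by rw [hMset]; exact hae.symm
            have hthis : γ ≤ |u a - u z| := hγ a z (by rw [haM]; exact ne_of_gt hc1)
            rw [abs_of_pos (by rw [haM]; linarith)] at hthis
            linarith [haM]
          have hkey := rpow_midpoint_le (A := Mz - (u z + ε)) (B := Mz - u z)
            (by linarith) (by linarith) (le_of_lt hp)
          have harg : (Mz - (u z + ε/2)) = ((Mz - (u z + ε)) + (Mz - u z)) / 2 := by ring
          rw [harg]
          calc H.w j * (((Mz - (u z + ε)) + (Mz - u z)) / 2) ^ p
              ≤ H.w j * (((Mz - (u z + ε)) ^ p + (Mz - u z) ^ p) / 2) :=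
                mul_le_mul_of_nonneg_left hkey hw
            _ = (H.w j * (Mz - u z) ^ p + H.w j * (Mz - (u z + ε)) ^ p) / 2 := by ring
        · linarith
      · rw [Finset.not_nonempty_iff_eq_empty] at hne
        rw [osc_of_erase_empty H _ j hzj hne, osc_of_erase_empty H _ j hzj hne,
          osc_of_erase_empty H _ j hzj hne]
        linarith
    · rw [osc_update_not_mem H u j hzj, osc_update_not_mem H u j hzj]
      linarith
  -- sum is zero, hence termwise equality
  have hsum : ∑ j : Fin m,
      ((H.w j * (osc H u j) ^ p + H.w j * (osc H (Function.update u z (u z + ε)) j) ^ p) / 2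
        - H.w j * (osc H (Function.update u z (u z + ε/2)) j) ^ p) = 0 := by
    have e1 : ∑ j : Fin m,
        ((H.w j * (osc H u j) ^ p + H.w j * (osc H (Function.update u z (u z + ε)) j) ^ p) / 2
          - H.w j * (osc H (Function.update u z (u z + ε/2)) j) ^ p)
        = (FH H p u + FH H p (Function.update u z (u z + ε))) / 2
          - FH H p (Function.update u z (u z + ε/2)) := by
      unfold FH
      rw [Finset.sum_sub_distrib, ← Finset.sum_div, Finset.sum_add_distrib]
    rw [e1, heq]
    have hle : (FH H p u + FH H p u) / 2
        - FH H p (Function.update u z (u z + ε/2)) ≤ 0 := by linarith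
    have hge : 0 ≤ (FH H p u + FH H p u) / 2
        - FH H p (Function.update u z (u z + ε/2)) := by
      have h2 : (FH H p u + FH H p (Function.update u z (u z + ε))) / 2
          - FH H p (Function.update u z (u z + ε/2)) ≥ 0 := by
        have hterms : ∀ j ∈ (Finset.univ : Finset (Fin m)), 0 ≤
            (H.w j * (osc H u j) ^ p
              + H.w j * (osc H (Function.update u z (u z + ε)) j) ^ p) / 2
            - H.w j * (osc H (Function.update u z (u z + ε/2)) j) ^ p :=
          fun j _ => by linarith [key j]
        have := Finset.sum_nonneg hterms
        rw [e1] at this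
        linarith
      rw [heq] at h2
      linarith
    linarith
  intro k hzk hne
  have hterm : (H.w k * (osc H u k) ^ p
      + H.w k * (osc H (Function.update u z (u z + ε)) k) ^ p) / 2
      - H.w k * (osc H (Function.update u z (u z + ε/2)) k) ^ p = 0 := by
    have hterms : ∀ j ∈ (Finset.univ : Finset (Fin m)), 0 ≤
        (H.w j * (osc H u j) ^ p
          + H.w j * (osc H (Function.update u z (u z + ε)) j) ^ p) / 2
        - H.w j * (osc H (Function.update u z (u z + ε/2)) j) ^ p :=
      fun j _ => by linarith [key j]
    exact (Finset.sum_eq_zero_iff_of_nonneg hterms).mp hsum k (Finset.mem_univ k)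
  have h0 := hosc0 k hzk hne
  have hh := hosc k hzk hne (ε/2) (by linarith) (by linarith)
  have h1 := hosc k hzk hne ε (le_of_lt hε) le_rfl
  set Mz := ((H.e k).erase z).sup' hne u with hMzdef
  set mz := ((H.e k).erase z).inf' hne u with hmzdef
  have hMm : mz ≤ Mz := by
    obtain ⟨a, ha⟩ := hne
    exact le_trans (Finset.inf'_le u ha) (Finset.le_sup' u ha)
  rw [h0, hh, h1] at hterm
  have hw := H.w_pos k
  by_cases hc1 : Mz ≤ u z <;> by_cases hc2 : u z < mz
  · linarith
  · exfalso
    simp only [if_pos hc1, if_neg hc2] at hterm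
    push_neg at hc2
    have hkey := rpow_midpoint_lt (A := u z - mz) (B := u z + ε - mz)
      (by linarith) (by linarith) (by intro h; apply absurd h; intro h'; linarith) hp
    have harg : (u z + ε/2 - mz) = ((u z - mz) + (u z + ε - mz)) / 2 := by ring
    rw [harg] at hterm
    nlinarith [hkey, hw]
  · exfalso
    simp only [if_neg hc1, if_pos hc2] at hterm
    push_neg at hc1
    have hεM : u z + ε < Mz := by
      obtain ⟨a, ha, hae⟩ := Finset.exists_mem_eq_sup' hne u
      have haM : u a = Mz := by rw [hMzdef]; exact hae.symm
      have hthis : γ ≤ |u a - u z| := hγ a z (by rw [haM]; exact ne_of_gt hc1)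
      rw [abs_of_pos (by rw [haM]; linarith)] at hthis
      linarith [haM]
    have hkey := rpow_midpoint_lt (A := Mz - (u z + ε)) (B := Mz - u z)
      (by linarith) (by linarith) (by intro h; linarith [hε]) hp
    have harg : (Mz - (u z + ε/2)) = ((Mz - (u z + ε)) + (Mz - u z)) / 2 := by ring
    rw [harg] at hterm
    nlinarith [hkey, hw]
  · push_neg at hc1 hc2
    exact ⟨hc1, hc2⟩

end Aux3

section Aux4

variable {V : Type*} [Fintype V] [DecidableEq V] {m : ℕ}

/-- Mirror of `rigidity_step` for downward perturbations. -/
lemma rigidity_step_neg (H : WeightedHypergraph V m) {p : ℝ} (hp : 1 < p) {L : Finset V} {y u : V → ℝ}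
    (hu : IsMinimizer H p L y u) {z : V} (hzL : z ∉ L) {ε γ : ℝ} (hε : ε < 0)
    (hγ : ∀ a b : V, u a ≠ u b → γ ≤ |u a - u b|) (hεγ : -ε < γ)
    (heq : FH H p (Function.update u z (u z + ε)) = FH H p u) :
    ∀ k : Fin m, z ∈ H.e k → ∀ hne : ((H.e k).erase z).Nonempty,
      ((H.e k).erase z).inf' hne u < u z ∧ u z ≤ ((H.e k).erase z).sup' hne u := by
  have hγ' : ∀ a b : V, (-u) a ≠ (-u) b → γ ≤ |(-u) a - (-u) b| := by
    intro a b hab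
    have : u a ≠ u b := by
      intro h; apply hab; simp [h]
    calc γ ≤ |u a - u b| := hγ a b this
      _ = |(-u) a - (-u) b| := by
          simp only [Pi.neg_apply]
          rw [show -u a - -u b = -(u a - u b) by ring, abs_neg]
  have heq' : FH H p (Function.update (-u) z ((-u) z + (-ε))) = FH H p (-u) := by
    have h1 : Function.update (-u) z ((-u) z + (-ε)) = -(Function.update u z (u z + ε)) := by
      rw [show (-u) z + (-ε) = -(u z + ε) by simp only [Pi.neg_apply]; ring, update_neg, neg_neg]
    rw [h1, FH_neg, FH_neg]
    exact heq
  have := rigidity_step H hp (isMinimizer_neg hu) hzL (by linarith : (0:ℝ) < -ε) hγ'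
    (by linarith) heq'
  intro k hzk hne
  obtain ⟨ha, hb⟩ := this k hzk hne
  rw [sup'_neg _ hne u] at ha
  rw [inf'_neg _ hne u] at hb
  simp only [Pi.neg_apply] at ha hb
  constructor <;> linarith

/-- Every hyperedge with positive oscillation attains its maximum at a vertex of `D`. -/
lemma exists_argmax_in_Dset (H : WeightedHypergraph V m) {p : ℝ} (hp : 1 < p) {L : Finset V}
    {y u : V → ℝ} (hu : IsMinimizer H p L y u) (k0 : Fin m) (hosc : 0 < osc H u k0) :
    ∃ a ∈ H.e k0, u a = (H.e k0).sup' (H.e_nonempty k0) u ∧ a ∈ Dset H p L u := by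
  by_contra hcon
  push_neg at hcon
  obtain ⟨γ, hγpos, hγ⟩ := exists_gap u
  set M := (H.e k0).sup' (H.e_nonempty k0) u with hM
  set S : Finset V := (H.e k0).filter (fun w => u w = M) with hS
  have hSsub : S ⊆ H.e k0 := Finset.filter_subset _ _
  have hSD : ∀ z ∈ S, z ∉ Dset H p L u := by
    intro z hz
    rw [hS, Finset.mem_filter] at hz
    exact hcon z hz.1 hz.2
  have hSL : ∀ z ∈ S, z ∉ L := by
    intro z hz hzL
    exact hSD z hz (Or.inl hzL)
  -- each maximal vertex admits a small downward move keeping FH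
  have hP : ∀ z ∈ S, ∀ k : Fin m, z ∈ H.e k → ∀ hne : ((H.e k).erase z).Nonempty,
      ((H.e k).erase z).inf' hne u < u z ∧ u z ≤ ((H.e k).erase z).sup' hne u := by
    intro z hzS
    have hzL := hSL z hzS
    have hzD := hSD z hzS
    rw [Dset, Set.mem_setOf_eq] at hzD
    push_neg at hzD
    obtain ⟨ε, hε1, hε2, hε3⟩ := hzD.2 hzL (γ/2) (by linarith)
    have heq : FH H p (Function.update u z (u z + ε)) = FH H p u :=
      le_antisymm hε3 (hu.2 _ (admissible_update hu.1 hzL _))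
    have hεne : ε ≠ 0 := by
      intro h; rw [h] at hε1; simp at hε1
    rcases lt_or_gt_of_ne hεne with hneg | hpos
    · exact rigidity_step_neg H hp hu hzL hneg hγ
        (by rw [abs_of_neg hneg] at hε2; linarith) heq
    · exfalso
      have hrig := rigidity_step H hp hu hzL hpos hγ
        (by rw [abs_of_pos hpos] at hε2; linarith) heq
      have hzk0 : z ∈ H.e k0 := hSsub hzS
      have hne0 : ((H.e k0).erase z).Nonempty := erase_nonempty_of_osc_pos H u k0 hosc hzk0
      have := (hrig k0 hzk0 hne0).1
      -- u z = M is the max over the whole edge, contradiction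
      have huzM : u z = M := by
        rw [hS, Finset.mem_filter] at hzS
        exact hzS.2
      have hle : ((H.e k0).erase z).sup' hne0 u ≤ M := by
        apply Finset.sup'_le
        intro a ha
        exact Finset.le_sup' u (Finset.mem_of_mem_erase ha)
      linarith [huzM ▸ this]
  -- the competitor
  set η := γ/2 with hη
  set v : V → ℝ := fun w => if w ∈ S then u w - η else u w with hv
  have hvle : ∀ w, v w ≤ u w := by
    intro w
    rw [hv]
    by_cases h : w ∈ S <;> simp [h] <;> linarith
  have hvL : Admissible L y v := by
    intro x hx
    have : x ∉ S := fun hxS => hSL x hxS hx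
    rw [hv]
    simp only [this, if_false]
    exact hu.1 x hx
  -- oscillation does not increase on any edge
  have hosc_le : ∀ k : Fin m, osc H v k ≤ osc H u k := by
    intro k
    by_cases hSk : ∃ w ∈ H.e k, w ∈ S
    · obtain ⟨w0, hw0k, hw0S⟩ := hSk
      by_cases hsing : ((H.e k).erase w0).Nonempty
      · -- general case : bound sup' and inf'
        rw [osc_eq_sup_sub_inf, osc_eq_sup_sub_inf]
        have hsup : (H.e k).sup' (H.e_nonempty k) v ≤ (H.e k).sup' (H.e_nonempty k) u :=
          Finset.sup'_mono_fun (fun a ha => hvle a)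
        have hinf : (H.e k).inf' (H.e_nonempty k) u ≤ (H.e k).inf' (H.e_nonempty k) v := by
          apply Finset.le_inf'
          intro a ha
          by_cases haS : a ∈ S
          · have hnea : ((H.e k).erase a).Nonempty := by
              by_contra hcon2
              rw [Finset.not_nonempty_iff_eq_empty] at hcon2
              -- then e k = {a}; but w0 ∈ e k; so w0 = a; erase a = erase w0 empty contra hsing
              have : H.e k = {a} := by
                apply Finset.eq_singleton_iff_unique_mem.mpr
                refine ⟨ha, fun b hb => ?_⟩
                by_contra hba
                exact absurd (Finset.mem_erase.mpr ⟨hba, hb⟩) (by simp [hcon2])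
              rw [this] at hw0k
              obtain ⟨c, hc⟩ := hsing
              rw [Finset.mem_singleton.mp hw0k] at hc
              rw [this] at hc
              simp at hc
            obtain ⟨hlow, _⟩ := hP a haS k ha hnea
            obtain ⟨b, hb, hbe⟩ := Finset.exists_mem_eq_inf' hnea u
            rw [hbe] at hlow
            have hbne : u b ≠ u a := ne_of_lt hlow
            have hgap := hγ b a hbne
            rw [abs_of_neg (by linarith)] at hgap
            have : v a = u a - η := by rw [hv]; simp [haS]
            rw [this]
            calc (H.e k).inf' (H.e_nonempty k) u ≤ u b :=
                Finset.inf'_le u (Finset.mem_of_mem_erase hb)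
              _ ≤ u a - η := by rw [hη]; linarith
          · have : v a = u a := by rw [hv]; simp [haS]
            rw [this]
            exact Finset.inf'_le u ha
        linarith
      · -- singleton edge
        rw [Finset.not_nonempty_iff_eq_empty] at hsing
        rw [osc_of_erase_empty H v k hw0k hsing, osc_of_erase_empty H u k hw0k hsing]
    · push_neg at hSk
      have : osc H v k = osc H u k := by
        apply osc_congr
        intro a ha
        rw [hv]
        simp [hSk a ha]
      rw [this]
  -- strict decrease on k0
  have hstrict : osc H v k0 ≤ osc H u k0 - η := by
    rw [osc_eq_sup_sub_inf, osc_eq_sup_sub_inf]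
    obtain ⟨a0, ha0, ha0e⟩ := Finset.exists_mem_eq_sup' (H.e_nonempty k0) u
    have ha0M : u a0 = M := by rw [hM]; exact ha0e.symm
    have hsup : (H.e k0).sup' (H.e_nonempty k0) v ≤ M - η := by
      apply Finset.sup'_le
      intro a ha
      by_cases haS : a ∈ S
      · have hva : v a = u a - η := by rw [hv]; simp [haS]
        rw [hva]
        have : u a = M := by rw [hS, Finset.mem_filter] at haS; exact haS.2
        linarith
      · have hva : v a = u a := by rw [hv]; simp [haS]
        rw [hva]
        have hne : u a ≠ M := by
          intro h
          exact haS (by rw [hS, Finset.mem_filter]; exact ⟨ha, h⟩)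
        have hltM : u a < M := by
          rw [hM]
          exact lt_of_le_of_ne (Finset.le_sup' u ha) (by rw [← hM]; exact hne)
        have hgap := hγ a a0 (by rw [ha0M]; exact hne)
        rw [abs_of_neg (by linarith)] at hgap
        rw [hη]
        linarith
    have hinf : (H.e k0).inf' (H.e_nonempty k0) u ≤ (H.e k0).inf' (H.e_nonempty k0) v := by
      apply Finset.le_inf'
      intro a ha
      by_cases haS : a ∈ S
      · have hnea := erase_nonempty_of_osc_pos H u k0 hosc ha
        obtain ⟨hlow, _⟩ := hP a haS k0 ha hnea
        obtain ⟨b, hb, hbe⟩ := Finset.exists_mem_eq_inf' hnea u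
        rw [hbe] at hlow
        have hgap := hγ b a (ne_of_lt hlow)
        rw [abs_of_neg (by linarith)] at hgap
        have hva : v a = u a - η := by rw [hv]; simp [haS]
        rw [hva]
        calc (H.e k0).inf' (H.e_nonempty k0) u ≤ u b :=
            Finset.inf'_le u (Finset.mem_of_mem_erase hb)
          _ ≤ u a - η := by rw [hη]; linarith
      · have hva : v a = u a := by rw [hv]; simp [haS]
        rw [hva]
        exact Finset.inf'_le u ha
    have hMs : M = (H.e k0).sup' (H.e_nonempty k0) u := hM
    linarith
  have hlt : FH H p v < FH H p u := by
    unfold FH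
    apply Finset.sum_lt_sum
    · intro k _
      exact mul_le_mul_of_nonneg_left
        (Real.rpow_le_rpow (osc_nonneg H v k) (hosc_le k) (by linarith))
        (le_of_lt (H.w_pos k))
    · refine ⟨k0, Finset.mem_univ k0, ?_⟩
      apply mul_lt_mul_of_pos_left _ (H.w_pos k0)
      apply Real.rpow_lt_rpow (osc_nonneg H v k0) _ (by linarith)
      linarith
  linarith [hu.2 v hvL]

/-- Every hyperedge with positive oscillation attains its minimum at a vertex of `D`. -/
lemma exists_argmin_in_Dset (H : WeightedHypergraph V m) {p : ℝ} (hp : 1 < p) {L : Finset V}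
    {y u : V → ℝ} (hu : IsMinimizer H p L y u) (k0 : Fin m) (hosc : 0 < osc H u k0) :
    ∃ a ∈ H.e k0, u a = (H.e k0).inf' (H.e_nonempty k0) u ∧ a ∈ Dset H p L u := by
  have hosc' : 0 < osc H (-u) k0 := by rwa [osc_neg]
  obtain ⟨a, ha, hae, haD⟩ := exists_argmax_in_Dset H hp (isMinimizer_neg hu) k0 hosc'
  refine ⟨a, ha, ?_, ?_⟩
  · rw [sup'_neg _ (H.e_nonempty k0) u] at hae
    simp only [Pi.neg_apply] at hae
    linarith
  · rwa [Dset_neg] at haD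

end Aux4

section Aux5

variable {V : Type*} [Fintype V] [DecidableEq V] {m : ℕ}

/-- Vertices of `e k` where `u` attains its maximum on `e k`. -/
noncomputable def amaxSet (H : WeightedHypergraph V m) (u : V → ℝ) (k : Fin m) : Finset V :=
  (H.e k).filter (fun w => u w = (H.e k).sup' (H.e_nonempty k) u)

/-- Vertices of `e k` where `u` attains its minimum on `e k`. -/
noncomputable def aminSet (H : WeightedHypergraph V m) (u : V → ℝ) (k : Fin m) : Finset V :=
  (H.e k).filter (fun w => u w = (H.e k).inf' (H.e_nonempty k) u)

lemma amaxSet_nonempty (H : WeightedHypergraph V m) (u : V → ℝ) (k : Fin m) :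
    (amaxSet H u k).Nonempty := by
  obtain ⟨a, ha, hae⟩ := Finset.exists_mem_eq_sup' (H.e_nonempty k) u
  exact ⟨a, Finset.mem_filter.mpr ⟨ha, hae.symm⟩⟩

lemma aminSet_nonempty (H : WeightedHypergraph V m) (u : V → ℝ) (k : Fin m) :
    (aminSet H u k).Nonempty := by
  obtain ⟨a, ha, hae⟩ := Finset.exists_mem_eq_inf' (H.e_nonempty k) u
  exact ⟨a, Finset.mem_filter.mpr ⟨ha, hae.symm⟩⟩

/-- The first-order change of the oscillation in direction `v`. -/
noncomputable def svec (H : WeightedHypergraph V m) (u v : V → ℝ) (k : Fin m) : ℝ :=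
  (amaxSet H u k).sup' (amaxSet_nonempty H u k) v
    - (aminSet H u k).inf' (aminSet_nonempty H u k) v

lemma sup'_perturb (H : WeightedHypergraph V m) (u v : V → ℝ) (k : Fin m) {t γ Bd : ℝ} (ht : 0 < t)
    (hBd : ∀ x, |v x| ≤ Bd) (hγ : ∀ a b : V, u a ≠ u b → γ ≤ |u a - u b|)
    (hsmall : 2 * t * Bd < γ) :
    (H.e k).sup' (H.e_nonempty k) (fun w => u w + t * v w)
      = (H.e k).sup' (H.e_nonempty k) u
        + t * (amaxSet H u k).sup' (amaxSet_nonempty H u k) v := by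
  set M := (H.e k).sup' (H.e_nonempty k) u with hM
  have hBd0 : 0 ≤ Bd := by
    obtain ⟨a, ha⟩ := H.e_nonempty k
    exact le_trans (abs_nonneg (v a)) (hBd a)
  have hvsup : -Bd ≤ (amaxSet H u k).sup' (amaxSet_nonempty H u k) v := by
    obtain ⟨a, ha⟩ := amaxSet_nonempty H u k
    calc -Bd ≤ v a := by have := hBd a; rw [abs_le] at this; linarith [this.1]
      _ ≤ _ := Finset.le_sup' v ha
  apply le_antisymm
  · apply Finset.sup'_le
    intro a ha
    by_cases haM : u a = M
    · have haA : a ∈ amaxSet H u k := Finset.mem_filter.mpr ⟨ha, haM⟩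
      have := Finset.le_sup' v haA
      have ht' := le_of_lt ht
      nlinarith [this]
    · have hlt : u a < M := lt_of_le_of_ne (Finset.le_sup' u ha) haM
      obtain ⟨a0, ha0, ha0e⟩ := Finset.exists_mem_eq_sup' (H.e_nonempty k) u
      have ha0M : u a0 = M := by rw [hM]; exact ha0e.symm
      have hgap := hγ a a0 (by rw [ha0M]; exact haM)
      rw [abs_of_neg (by linarith)] at hgap
      have h1 : v a ≤ Bd := by have := hBd a; rw [abs_le] at this; exact this.2
      nlinarith
  · obtain ⟨a, ha, hae⟩ := Finset.exists_mem_eq_sup' (amaxSet_nonempty H u k) v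
    have haM : u a = M := (Finset.mem_filter.mp ha).2
    have hak : a ∈ H.e k := (Finset.mem_filter.mp ha).1
    calc M + t * (amaxSet H u k).sup' (amaxSet_nonempty H u k) v
        = u a + t * v a := by rw [haM, hae]
      _ ≤ _ := Finset.le_sup' (fun w => u w + t * v w) hak

lemma inf'_perturb (H : WeightedHypergraph V m) (u v : V → ℝ) (k : Fin m) {t γ Bd : ℝ} (ht : 0 < t)
    (hBd : ∀ x, |v x| ≤ Bd) (hγ : ∀ a b : V, u a ≠ u b → γ ≤ |u a - u b|)
    (hsmall : 2 * t * Bd < γ) :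
    (H.e k).inf' (H.e_nonempty k) (fun w => u w + t * v w)
      = (H.e k).inf' (H.e_nonempty k) u
        + t * (aminSet H u k).inf' (aminSet_nonempty H u k) v := by
  set mI := (H.e k).inf' (H.e_nonempty k) u with hmI
  have hvinf : (aminSet H u k).inf' (aminSet_nonempty H u k) v ≤ Bd := by
    obtain ⟨a, ha⟩ := aminSet_nonempty H u k
    calc (aminSet H u k).inf' (aminSet_nonempty H u k) v ≤ v a := Finset.inf'_le v ha
      _ ≤ Bd := by have := hBd a; rw [abs_le] at this; exact this.2
  apply le_antisymm
  · obtain ⟨a, ha, hae⟩ := Finset.exists_mem_eq_inf' (aminSet_nonempty H u k) v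
    have haM : u a = mI := (Finset.mem_filter.mp ha).2
    have hak : a ∈ H.e k := (Finset.mem_filter.mp ha).1
    calc (H.e k).inf' (H.e_nonempty k) (fun w => u w + t * v w)
        ≤ u a + t * v a := Finset.inf'_le (fun w => u w + t * v w) hak
      _ = mI + t * (aminSet H u k).inf' (aminSet_nonempty H u k) v := by rw [haM, hae]
  · apply Finset.le_inf'
    intro a ha
    by_cases haM : u a = mI
    · have haA : a ∈ aminSet H u k := Finset.mem_filter.mpr ⟨ha, haM⟩
      have := Finset.inf'_le v haA
      nlinarith
    · have hlt : mI < u a := lt_of_le_of_ne (Finset.inf'_le u ha) (fun h => haM h.symm)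
      obtain ⟨a0, ha0, ha0e⟩ := Finset.exists_mem_eq_inf' (H.e_nonempty k) u
      have ha0M : u a0 = mI := by rw [hmI]; exact ha0e.symm
      have hgap := hγ a a0 (by rw [ha0M]; exact haM)
      rw [abs_of_pos (by linarith)] at hgap
      have h1 : -Bd ≤ v a := by have := hBd a; rw [abs_le] at this; linarith [this.1]
      nlinarith

/-- First-order optimality: no admissible direction strictly decreases `F_H`. -/
lemma descent (H : WeightedHypergraph V m) {p : ℝ} (hp : 1 < p) {L : Finset V} {y u : V → ℝ}
    (hu : IsMinimizer H p L y u) (v : V → ℝ) (hvL : ∀ x ∈ L, v x = 0) :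
    0 ≤ ∑ k ∈ Finset.univ.filter (fun k => 0 < osc H u k),
        (H.w k * osc H u k ^ (p - 1)) * svec H u v k := by
  by_contra hneg
  push_neg at hneg
  have hp0 : (0:ℝ) < p := by linarith
  set K := Finset.univ.filter (fun k => 0 < osc H u k) with hK
  set SS := ∑ k ∈ K, (H.w k * osc H u k ^ (p - 1)) * svec H u v k with hSS
  set D0 := p * SS with hD0
  have hD0neg : D0 < 0 := by
    rw [hD0]
    exact mul_neg_of_pos_of_neg hp0 hneg
  obtain ⟨γ, hγpos, hγ⟩ := exists_gap u
  set Bd := ∑ x : V, |v x| with hBd'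
  have hBd : ∀ x, |v x| ≤ Bd := by
    intro x
    rw [hBd']
    exact Finset.single_le_sum (fun i _ => abs_nonneg (v i)) (Finset.mem_univ x)
  have hBd0 : 0 ≤ Bd := by
    rw [hBd']
    exact Finset.sum_nonneg (fun i _ => abs_nonneg (v i))
  -- oscillations along the perturbation
  have hoscK : ∀ k ∈ K, ∀ t : ℝ, 0 < t → 2*t*Bd < γ →
      osc H (fun w => u w + t * v w) k = osc H u k + t * svec H u v k := by
    intro k hk t ht hts
    rw [osc_eq_sup_sub_inf, osc_eq_sup_sub_inf,
      sup'_perturb H u v k ht hBd hγ hts, inf'_perturb H u v k ht hBd hγ hts, svec]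
    ring
  have hosc0 : ∀ k ∉ K, ∀ t : ℝ, 0 < t →
      osc H (fun w => u w + t * v w) k ≤ t * (2*Bd) := by
    intro k hk t ht
    have hosc_z : osc H u k = 0 := by
      rw [hK, Finset.mem_filter] at hk
      push_neg at hk
      exact le_antisymm (hk (Finset.mem_univ k)) (osc_nonneg H u k)
    obtain ⟨a0, ha0⟩ := H.e_nonempty k
    have hconst : ∀ w ∈ H.e k, u w = u a0 := by
      intro w hw
      have h1 : |u w - u a0| ≤ osc H u k := Finset.le_sup' (fun q : V × V => |u q.1 - u q.2|)
        (show ((w, a0) : V × V) ∈ H.e k ×ˢ H.e k from Finset.mem_product.mpr ⟨hw, ha0⟩)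
      rw [hosc_z] at h1
      have h2 : u w - u a0 = 0 := abs_eq_zero.mp (le_antisymm h1 (abs_nonneg _))
      linarith
    rw [osc_eq_sup_sub_inf]
    have hs : (H.e k).sup' (H.e_nonempty k) (fun w => u w + t*v w) ≤ u a0 + t*Bd := by
      apply Finset.sup'_le
      intro a ha
      have h1 := hconst a ha
      have h2 := (abs_le.mp (hBd a)).2
      nlinarith
    have hi : u a0 - t*Bd ≤ (H.e k).inf' (H.e_nonempty k) (fun w => u w + t*v w) := by
      apply Finset.le_inf'
      intro a ha
      have h1 := hconst a ha
      have h2 := (abs_le.mp (hBd a)).1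
      nlinarith
    linarith
  -- the smooth part and its derivative at 0
  have hderiv : HasDerivAt (fun t => ∑ k ∈ K, H.w k * (osc H u k + t * svec H u v k) ^ p) D0 0 := by
    have hterm : ∀ k ∈ K, HasDerivAt (fun t => H.w k * (osc H u k + t * svec H u v k) ^ p)
        (H.w k * (svec H u v k * p * osc H u k ^ (p-1))) 0 := by
      intro k hk
      have hoscpos : 0 < osc H u k := by
        rw [hK, Finset.mem_filter] at hk; exact hk.2
      have h1 : HasDerivAt (fun t : ℝ => osc H u k + t * svec H u v k) (svec H u v k) 0 := by
        simpa using ((hasDerivAt_id (0:ℝ)).mul_const (svec H u v k)).const_add (osc H u k)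
      have h2 := h1.rpow_const (p := p) (Or.inl (by simpa using ne_of_gt hoscpos))
      have h3 := h2.const_mul (H.w k)
      exact h3.congr_deriv (by simp)
    have hsum := HasDerivAt.fun_sum hterm
    refine hsum.congr_deriv (Eq.symm ?_)
    rw [hD0, hSS, Finset.mul_sum]
    exact Finset.sum_congr rfl (fun k hk => by ring)
  have hslope := hasDerivAt_iff_tendsto_slope.mp hderiv
  -- eventual facts on 𝓝[>] 0
  have hmono : nhdsWithin (0:ℝ) (Set.Ioi 0) ≤ nhdsWithin (0:ℝ) {(0:ℝ)}ᶜ :=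
    nhdsWithin_mono 0 (fun t ht => ne_of_gt ht)
  have hev1 : ∀ᶠ t in nhdsWithin (0:ℝ) (Set.Ioi 0),
      slope (fun t => ∑ k ∈ K, H.w k * (osc H u k + t * svec H u v k) ^ p) 0 t < D0/2 := by
    apply Filter.Eventually.filter_mono hmono
    exact hslope (Iio_mem_nhds (by linarith : D0 < D0/2))
  set δ1 := γ/(2*Bd+1) with hδ1
  have hδ1pos : 0 < δ1 := by
    rw [hδ1]; positivity
  have hev2 : ∀ᶠ t in nhdsWithin (0:ℝ) (Set.Ioi 0), t ∈ Set.Ioo (0:ℝ) δ1 :=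
    Ioo_mem_nhdsGT_of_mem (Set.mem_Ico.mpr ⟨le_refl _, hδ1pos⟩)
  set R := ∑ k ∈ Finset.univ.filter (fun k => ¬ 0 < osc H u k), H.w k * (2*Bd)^p with hR
  have hR0 : 0 ≤ R := by
    rw [hR]
    apply Finset.sum_nonneg
    intro k _
    exact mul_nonneg (le_of_lt (H.w_pos k)) (Real.rpow_nonneg (by linarith) p)
  set X := (-D0/2)/(R+1) with hX
  have hXpos : 0 < X := by
    rw [hX]
    apply div_pos (by linarith) (by linarith)
  set δ2 := X ^ (p-1)⁻¹ with hδ2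
  have hδ2pos : 0 < δ2 := Real.rpow_pos_of_pos hXpos _
  have hδ2X : δ2 ^ (p-1) = X := Real.rpow_inv_rpow (le_of_lt hXpos) (by intro h; rw [sub_eq_zero] at h; exact absurd h (by linarith))
  have hev3 : ∀ᶠ t in nhdsWithin (0:ℝ) (Set.Ioi 0), t ∈ Set.Ioo (0:ℝ) δ2 :=
    Ioo_mem_nhdsGT_of_mem (Set.mem_Ico.mpr ⟨le_refl _, hδ2pos⟩)
  obtain ⟨t, hslope_t, ht1, ht2⟩ := (hev1.and (hev2.and hev3)).exists
  obtain ⟨ht, htδ1⟩ := ht1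
  obtain ⟨-, htδ2⟩ := ht2
  have hts : 2*t*Bd < γ := by
    have h1 : 2*t*Bd < t*(2*Bd+1) := by nlinarith
    have h2 : t*(2*Bd+1) < δ1*(2*Bd+1) := by nlinarith
    have h3 : δ1*(2*Bd+1) = γ := by
      rw [hδ1]; field_simp
    linarith
  -- assemble the competitor value
  have hh0 : (fun t => ∑ k ∈ K, H.w k * (osc H u k + t * svec H u v k) ^ p) 0
      = ∑ k ∈ K, H.w k * (osc H u k) ^ p := by
    simp
  have hFHu : FH H p u = ∑ k ∈ K, H.w k * (osc H u k) ^ p := by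
    rw [FH, ← Finset.sum_filter_add_sum_filter_not Finset.univ (fun k => 0 < osc H u k)]
    have hz : ∑ k ∈ Finset.univ.filter (fun k => ¬ 0 < osc H u k),
        H.w k * (osc H u k) ^ p = 0 := by
      apply Finset.sum_eq_zero
      intro k hk
      rw [Finset.mem_filter] at hk
      have : osc H u k = 0 := le_antisymm (not_lt.mp hk.2) (osc_nonneg H u k)
      rw [this, Real.zero_rpow (ne_of_gt hp0), mul_zero]
    rw [hz, add_zero, hK]
  have hsplit : FH H p (fun w => u w + t * v w)
      = (∑ k ∈ K, H.w k * (osc H u k + t * svec H u v k) ^ p)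
        + ∑ k ∈ Finset.univ.filter (fun k => ¬ 0 < osc H u k),
            H.w k * (osc H (fun w => u w + t*v w) k) ^ p := by
    rw [FH, ← Finset.sum_filter_add_sum_filter_not Finset.univ (fun k => 0 < osc H u k)]
    congr 1
    rw [hK]
    apply Finset.sum_congr rfl
    intro k hk
    rw [hoscK k (by rw [hK]; exact hk) t ht hts]
  have hbound2 : ∑ k ∈ Finset.univ.filter (fun k => ¬ 0 < osc H u k),
      H.w k * (osc H (fun w => u w + t*v w) k) ^ p ≤ R * t^p := by
    have : R * t^p = ∑ k ∈ Finset.univ.filter (fun k => ¬ 0 < osc H u k),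
        H.w k * (2*Bd)^p * t^p := by
      rw [hR, Finset.sum_mul]
    rw [this]
    apply Finset.sum_le_sum
    intro k hk
    rw [Finset.mem_filter] at hk
    have h1 : osc H (fun w => u w + t*v w) k ≤ t * (2*Bd) := by
      apply hosc0 k _ t ht
      rw [hK, Finset.mem_filter]
      exact fun hc => hk.2 hc.2
    have h2 : (osc H (fun w => u w + t*v w) k) ^ p ≤ (t * (2*Bd)) ^ p :=
      Real.rpow_le_rpow (osc_nonneg _ _ _) h1 (le_of_lt hp0)
    have h3 : (t * (2*Bd)) ^ p = t^p * (2*Bd)^p :=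
      Real.mul_rpow (le_of_lt ht) (by linarith)
    calc H.w k * (osc H (fun w => u w + t*v w) k) ^ p
        ≤ H.w k * (t * (2*Bd))^p := mul_le_mul_of_nonneg_left h2 (le_of_lt (H.w_pos k))
      _ = H.w k * (2*Bd)^p * t^p := by rw [h3]; ring
  -- the slope bound gives the decrease of the smooth part
  have hslope_eq : slope (fun t => ∑ k ∈ K, H.w k * (osc H u k + t * svec H u v k) ^ p) 0 t
      = ((∑ k ∈ K, H.w k * (osc H u k + t * svec H u v k) ^ p)
        - ∑ k ∈ K, H.w k * (osc H u k) ^ p) / t := by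
    rw [slope_def_field]
    have htne : t ≠ 0 := ne_of_gt ht
    field_simp
    simp
  have hht : (∑ k ∈ K, H.w k * (osc H u k + t * svec H u v k) ^ p)
      < (∑ k ∈ K, H.w k * (osc H u k) ^ p) + t * (D0/2) := by
    rw [hslope_eq] at hslope_t
    rw [div_lt_iff₀ ht] at hslope_t
    linarith
  have htp : t ^ p = t ^ (p-1) * t := by
    calc t ^ p = t ^ (p - 1 + 1) := by rw [sub_add_cancel]
      _ = t ^ (p-1) * t ^ (1:ℝ) := Real.rpow_add ht _ _
      _ = t ^ (p-1) * t := by rw [Real.rpow_one]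
  have hRt : R * t ^ p < -D0/2 * t := by
    have h1 : t^(p-1) < δ2^(p-1) := Real.rpow_lt_rpow (le_of_lt ht) htδ2 (by linarith)
    rw [hδ2X] at h1
    have h2 : R * t^(p-1) ≤ R * X := mul_le_mul_of_nonneg_left (le_of_lt h1) hR0
    have h3 : R * X < (R+1) * X := by nlinarith
    have hR1 : R + 1 ≠ 0 := by linarith
    have h4 : (R+1)*X = -D0/2 := by rw [hX, mul_comm]; exact div_mul_cancel₀ _ hR1
    have h5 : R * t^(p-1) < -D0/2 := by linarith
    calc R * t^p = (R * t^(p-1)) * t := by rw [htp]; ring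
      _ < (-D0/2) * t := mul_lt_mul_of_pos_right h5 ht
  have hadm : Admissible L y (fun w => u w + t * v w) := by
    intro x hx
    show u x + t * v x = y x
    rw [hvL x hx, hu.1 x hx]
    ring
  have hmin := hu.2 _ hadm
  rw [hFHu, hsplit] at hmin
  linarith

end Aux5

section Aux6

variable {V : Type*} [Fintype V] [DecidableEq V] {m : ℕ}

lemma ip_ind (a : V) (u : V → ℝ) : ip (ind a) u = u a := by
  unfold ip ind
  rw [Finset.sum_eq_single a]
  · simp
  · intro b _ hb
    simp [hb]
  · intro h
    exact absurd (Finset.mem_univ a) h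

lemma ip_linear (u : V → ℝ) : IsLinearMap ℝ (fun b : V → ℝ => ip b u) := by
  constructor
  · intro b b'
    unfold ip
    rw [← Finset.sum_add_distrib]
    exact Finset.sum_congr rfl (fun x _ => by simp [add_mul])
  · intro r b
    show ip (r • b) u = r • ip b u
    rw [smul_eq_mul]
    unfold ip
    rw [Finset.mul_sum]
    exact Finset.sum_congr rfl (fun x _ => by simp [mul_assoc])

lemma ip_sub (b c u : V → ℝ) : ip (b - c) u = ip b u - ip c u := by
  unfold ip
  rw [← Finset.sum_sub_distrib]
  exact Finset.sum_congr rfl (fun x _ => by simp [sub_mul])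

lemma ip_smul (r : ℝ) (b u : V → ℝ) : ip (r • b) u = r * ip b u := by
  unfold ip
  rw [Finset.mul_sum]
  exact Finset.sum_congr rfl (fun x _ => by simp [mul_assoc])

lemma ip_sum {ι : Type*} (t : Finset ι) (f : ι → V → ℝ) (u : V → ℝ) :
    ip (∑ i ∈ t, f i) u = ∑ i ∈ t, ip (f i) u := by
  unfold ip
  rw [Finset.sum_comm]
  exact Finset.sum_congr rfl (fun x _ => by rw [Finset.sum_apply, Finset.sum_mul])

lemma ip_le_osc (H : WeightedHypergraph V m) (u : V → ℝ) (k : Fin m) :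
    ∀ b ∈ Bset (H.e k), ip b u ≤ osc H u k := by
  intro b hb
  have hconv : Convex ℝ {b : V → ℝ | ip b u ≤ osc H u k} :=
    convex_halfSpace_le (ip_linear u) _
  refine convexHull_min ?_ hconv hb
  rintro b ⟨xi, hxi, xj, hxj, rfl⟩
  show ip (ind xi - ind xj) u ≤ osc H u k
  rw [ip_sub, ip_ind, ip_ind, osc_eq_sup_sub_inf]
  have h2 := Finset.le_sup' u hxi
  have h3 := Finset.inf'_le u hxj
  linarith

lemma zero_mem_Bset (e : Finset V) (he : e.Nonempty) : (0 : V → ℝ) ∈ Bset e := by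
  apply subset_convexHull
  obtain ⟨a, ha⟩ := he
  exact ⟨a, ha, a, ha, by simp⟩

end Aux6

section Aux7

variable {V : Type*} [Fintype V] [DecidableEq V] {m : ℕ}

lemma exists_balanced (H : WeightedHypergraph V m) {p : ℝ} (hp : 1 < p) {L : Finset V} {y u : V → ℝ}
    (hu : IsMinimizer H p L y u) :
    ∃ β : Fin m → V → ℝ,
      (∀ k, osc H u k = 0 → β k = 0) ∧
      (∀ k, 0 < osc H u k → β k ∈ Bset (H.e k)) ∧
      (∀ k, 0 < osc H u k → ip (β k) u = osc H u k) ∧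
      (∀ k x, 0 < osc H u k → x ∈ amaxSet H u k → 0 ≤ β k x) ∧
      (∀ k x, 0 < osc H u k → x ∈ aminSet H u k → β k x ≤ 0) ∧
      (∀ k x, 0 < osc H u k → x ∉ amaxSet H u k → x ∉ aminSet H u k → β k x = 0) ∧
      (∀ x, x ∉ L → ∑ k : Fin m, (H.w k * osc H u k ^ (p - 1)) * β k x = 0) := by
  classical
  set K := Finset.univ.filter (fun k => 0 < osc H u k) with hK
  set c : Fin m → ℝ := fun k => H.w k * osc H u k ^ (p - 1) with hc
  set Ψ : (Fin m → V × V) → (V → ℝ) :=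
    fun τ => ∑ k ∈ K, c k • (ind (τ k).1 - ind (τ k).2) with hΨ
  set Sel : Set (Fin m → V × V) :=
    {τ | ∀ k ∈ K, (τ k).1 ∈ amaxSet H u k ∧ (τ k).2 ∈ aminSet H u k} with hSel
  set S : Set (V → ℝ) := Ψ '' Sel with hS
  have hSfin : S.Finite := (Set.toFinite Sel).image Ψ
  set ψ : (V → ℝ) → (V → ℝ) := fun g x => if x ∈ L then 0 else g x with hψ
  have hψlin : IsLinearMap ℝ ψ := by
    constructor
    · intro a b
      funext x
      by_cases hx : x ∈ L <;> simp [hψ, hx]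
    · intro r a
      funext x
      by_cases hx : x ∈ L <;> simp [hψ, hx]
  -- MAIN CLAIM : 0 is in the image of the convex hull
  have hmain : (0 : V → ℝ) ∈ ψ '' (convexHull ℝ S) := by
    by_contra hC
    rw [hψlin.image_convexHull] at hC
    have hfin2 : (ψ '' S).Finite := hSfin.image _
    obtain ⟨f, u0, hf0, hfs⟩ := geometric_hahn_banach_point_closed
      (convex_convexHull ℝ _) (hfin2.isCompact_convexHull ℝ).isClosed hC
    rw [map_zero] at hf0
    set v : V → ℝ := fun x => if x ∈ L then 0 else -(f (ind x)) with hv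
    have hvL : ∀ x ∈ L, v x = 0 := fun x hx => by rw [hv]; simp [hx]
    have hfd : ∀ g : V → ℝ, f g = ∑ x : V, g x * f (ind x) := by
      intro g
      conv_lhs => rw [pi_eq_sum_univ g]
      rw [map_sum]
      refine Finset.sum_congr rfl (fun x _ => ?_)
      rw [map_smul]
      have hix : (fun j => if x = j then (1:ℝ) else 0) = ind x := by
        funext z
        simp [ind, eq_comm]
      rw [hix, smul_eq_mul]
    have hfψ : ∀ g : V → ℝ, f (ψ g) = - ip g v := by
      intro g
      rw [hfd (ψ g)]
      unfold ip
      rw [← Finset.sum_neg_distrib]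
      refine Finset.sum_congr rfl (fun x _ => ?_)
      by_cases hx : x ∈ L
      · simp [hψ, hv, hx]
      · simp only [hψ, hv, hx, if_false]
        ring
    -- extremal selection in direction v
    have hchoice : ∀ k : Fin m, ∃ ab : V × V, ab.1 ∈ amaxSet H u k ∧ ab.2 ∈ aminSet H u k ∧
        v ab.1 = (amaxSet H u k).sup' (amaxSet_nonempty H u k) v ∧
        v ab.2 = (aminSet H u k).inf' (aminSet_nonempty H u k) v := by
      intro k
      obtain ⟨a, ha, hae⟩ := Finset.exists_mem_eq_sup' (amaxSet_nonempty H u k) v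
      obtain ⟨b, hb, hbe⟩ := Finset.exists_mem_eq_inf' (aminSet_nonempty H u k) v
      exact ⟨(a, b), ha, hb, hae.symm, hbe.symm⟩
    choose τh hτ1 hτ2 hτ3 hτ4 using hchoice
    have hτSel : (fun k => τh k) ∈ Sel := fun k _ => ⟨hτ1 k, hτ2 k⟩
    have hmem : ψ (Ψ (fun k => τh k)) ∈ convexHull ℝ (ψ '' S) :=
      subset_convexHull ℝ _ ⟨Ψ (fun k => τh k), ⟨fun k => τh k, hτSel, rfl⟩, rfl⟩
    have hgt := hfs _ hmem
    have hexp : ip (Ψ (fun k => τh k)) v = ∑ k ∈ K, c k * svec H u v k := by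
      rw [hΨ, ip_sum]
      refine Finset.sum_congr rfl (fun k hk => ?_)
      rw [ip_smul, ip_sub, ip_ind, ip_ind, svec, hτ3 k, hτ4 k]
    rw [hfψ, hexp] at hgt
    have hdes := descent H hp hu v hvL
    rw [← hK] at hdes
    have : (0:ℝ) < u0 := hf0
    have : ∑ k ∈ K, c k * svec H u v k < 0 := by linarith
    rw [hc] at this
    linarith
  -- decompose the hull element
  obtain ⟨g, hgC, hg0⟩ := hmain
  rw [_root_.convexHull_eq] at hgC
  obtain ⟨ι, tt, wt, zz, hwt0, hwt1, hzS, hcm⟩ := hgC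
  have hcm' : g = ∑ i ∈ tt, wt i • zz i := by
    rw [← hcm, Finset.centerMass_eq_of_sum_1 _ _ hwt1]
  set τjunk : Fin m → V × V :=
    fun k => ((H.e_nonempty k).choose, (H.e_nonempty k).choose) with hτjunk
  set τs : ι → (Fin m → V × V) :=
    fun i => if hi : i ∈ tt then (hzS i hi).choose else τjunk with hτs
  have hτsSel : ∀ i ∈ tt, τs i ∈ Sel := by
    intro i hi
    rw [hτs]
    simp only [dif_pos hi]
    exact (hzS i hi).choose_spec.1
  have hτsΨ : ∀ i ∈ tt, Ψ (τs i) = zz i := by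
    intro i hi
    rw [hτs]
    simp only [dif_pos hi]
    exact (hzS i hi).choose_spec.2
  set β : Fin m → V → ℝ := fun k =>
    if 0 < osc H u k then ∑ i ∈ tt, wt i • (ind ((τs i) k).1 - ind ((τs i) k).2)
    else 0 with hβ
  have hmaxmin : ∀ k, 0 < osc H u k → ∀ i ∈ tt,
      ((τs i) k).1 ∈ amaxSet H u k ∧ ((τs i) k).2 ∈ aminSet H u k := by
    intro k hk i hi
    exact hτsSel i hi k (by rw [hK]; simp [hk])
  have hdisj : ∀ k, 0 < osc H u k → ∀ x, x ∈ amaxSet H u k → x ∉ aminSet H u k := by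
    intro k hk x hx hx'
    have h1 : u x = (H.e k).sup' (H.e_nonempty k) u := (Finset.mem_filter.mp hx).2
    have h2 : u x = (H.e k).inf' (H.e_nonempty k) u := (Finset.mem_filter.mp hx').2
    rw [osc_eq_sup_sub_inf] at hk
    linarith [h1.symm.trans h2]
  refine ⟨β, ?_, ?_, ?_, ?_, ?_, ?_, ?_⟩
  · intro k hk
    simp only [hβ]
    rw [if_neg (by rw [hk]; exact lt_irrefl 0)]
  · intro k hk
    simp only [hβ]
    rw [if_pos hk]
    rw [show ∑ i ∈ tt, wt i • (ind ((τs i) k).1 - ind ((τs i) k).2)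
        = tt.centerMass wt (fun i => ind ((τs i) k).1 - ind ((τs i) k).2) from
      (Finset.centerMass_eq_of_sum_1 _ _ hwt1).symm]
    apply Finset.centerMass_mem_convexHull tt hwt0 (by rw [hwt1]; norm_num)
    intro i hi
    obtain ⟨h1, h2⟩ := hmaxmin k hk i hi
    exact ⟨((τs i) k).1, (Finset.mem_filter.mp h1).1, ((τs i) k).2,
      (Finset.mem_filter.mp h2).1, rfl⟩
  · intro k hk
    simp only [hβ]
    rw [if_pos hk, ip_sum]
    have : ∀ i ∈ tt, ip (wt i • (ind ((τs i) k).1 - ind ((τs i) k).2)) u = wt i * osc H u k := by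
      intro i hi
      obtain ⟨h1, h2⟩ := hmaxmin k hk i hi
      rw [ip_smul, ip_sub, ip_ind, ip_ind, (Finset.mem_filter.mp h1).2,
        (Finset.mem_filter.mp h2).2, ← osc_eq_sup_sub_inf]
    rw [Finset.sum_congr rfl this, ← Finset.sum_mul, hwt1, one_mul]
  · intro k x hk hx
    simp only [hβ]
    rw [if_pos hk, Finset.sum_apply]
    apply Finset.sum_nonneg
    intro i hi
    obtain ⟨h1, h2⟩ := hmaxmin k hk i hi
    have hne2 : ((τs i) k).2 ≠ x := by
      intro h
      exact hdisj k hk x hx (h ▸ h2)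
    simp only [Pi.smul_apply, Pi.sub_apply, smul_eq_mul]
    have : ind ((τs i) k).2 x = 0 := by simp [ind, Ne.symm hne2]
    rw [this]
    have : (0:ℝ) ≤ ind ((τs i) k).1 x := by unfold ind; split_ifs <;> norm_num
    have := hwt0 i hi
    nlinarith
  · intro k x hk hx
    simp only [hβ]
    rw [if_pos hk, Finset.sum_apply]
    apply Finset.sum_nonpos
    intro i hi
    obtain ⟨h1, h2⟩ := hmaxmin k hk i hi
    have hne1 : ((τs i) k).1 ≠ x := by
      intro h
      exact hdisj k hk x (h ▸ h1) hx
    simp only [Pi.smul_apply, Pi.sub_apply, smul_eq_mul]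
    have : ind ((τs i) k).1 x = 0 := by simp [ind, Ne.symm hne1]
    rw [this]
    have : (0:ℝ) ≤ ind ((τs i) k).2 x := by unfold ind; split_ifs <;> norm_num
    have := hwt0 i hi
    nlinarith
  · intro k x hk hx1 hx2
    simp only [hβ]
    rw [if_pos hk, Finset.sum_apply]
    apply Finset.sum_eq_zero
    intro i hi
    obtain ⟨h1, h2⟩ := hmaxmin k hk i hi
    have hne1 : ((τs i) k).1 ≠ x := fun h => hx1 (h ▸ h1)
    have hne2 : ((τs i) k).2 ≠ x := fun h => hx2 (h ▸ h2)
    simp only [Pi.smul_apply, Pi.sub_apply, smul_eq_mul]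
    simp [ind, Ne.symm hne1, Ne.symm hne2]
  · intro x hxL
    have hgx : g x = 0 := by
      have h0 := congrFun hg0 x
      rw [hψ] at h0
      simpa [hxL] using h0
    have hswap : ∑ k : Fin m, c k * β k x = g x := by
      have h1 : ∑ k : Fin m, c k * β k x = ∑ k ∈ K, c k * β k x := by
        rw [hK]
        rw [Finset.sum_filter]
        apply Finset.sum_congr rfl
        intro k _
        by_cases hk : 0 < osc H u k
        · simp [hk]
        · have hz : β k = 0 := by simp only [hβ]; rw [if_neg hk]
          simp [hk, hz]
      rw [h1, hcm']
      have h2 : ∀ k ∈ K, c k * β k x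
          = ∑ i ∈ tt, wt i * (c k * ((ind ((τs i) k).1 - ind ((τs i) k).2) x)) := by
        intro k hk
        have hkpos : 0 < osc H u k := by rw [hK] at hk; exact (Finset.mem_filter.mp hk).2
        simp only [hβ]
        rw [if_pos hkpos, Finset.sum_apply, Finset.mul_sum]
        refine Finset.sum_congr rfl (fun i hi => ?_)
        simp only [Pi.smul_apply, smul_eq_mul]
        ring
      rw [Finset.sum_congr rfl h2, Finset.sum_comm]
      rw [Finset.sum_apply]
      refine Finset.sum_congr rfl (fun i hi => ?_)
      rw [← hτsΨ i hi, hΨ]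
      simp only [Pi.smul_apply, smul_eq_mul, Finset.sum_apply]
      rw [Finset.mul_sum]
    rw [hc] at hswap
    rw [hswap, hgx]

end Aux7

/-- a minimizer of `F_H^{con}` solves the hypergraph p-Laplacian equation
on `D \ L`, with diffusion coefficients `|β_k(x_i)|` coming from maximizers
`β_k ∈ argmax_{b ∈ B_k} ⟨b, u⟩`, and maxima/minima taken over `e_k ∩ D`. -/
theorem minimizer_solves_pLaplacian_on_D [DecidableEq V] (H : WeightedHypergraph V m) (p : ℝ)
    (hp : 1 < p) (L : Finset V) (hL : L.Nonempty) (y u : V → ℝ)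
    (hu : IsMinimizer H p L y u) :
    ∃ β : Fin m → (V → ℝ),
      (∀ k : Fin m, β k ∈ Bset (H.e k) ∧ ∀ b ∈ Bset (H.e k), ip b u ≤ ip (β k) u) ∧
      ∀ x ∈ Dset H p L u, x ∉ L →
        ∑ k ∈ Finset.univ.filter (fun k => x ∈ H.e k),
          H.w k * |β k x| *
            phiP p (sSup (u '' {z | z ∈ H.e k ∧ z ∈ Dset H p L u}) +
                    sInf (u '' {z | z ∈ H.e k ∧ z ∈ Dset H p L u}) - 2 * u x) = 0 := by
  obtain ⟨β, hb0, hbB, hbip, hbmax, hbmin, hbsupp, hbal⟩ := exists_balanced H hp hu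
  refine ⟨β, ?_, ?_⟩
  · intro k
    rcases eq_or_lt_of_le (osc_nonneg H u k) with hk | hk
    · have hz : β k = 0 := hb0 k hk.symm
      constructor
      · rw [hz]
        exact zero_mem_Bset _ (H.e_nonempty k)
      · intro b hb
        have h1 := ip_le_osc H u k b hb
        have h2 : ip (β k) u = 0 := by rw [hz]; unfold ip; simp
        rw [h2]
        linarith [hk, h1]
    · refine ⟨hbB k hk, fun b hb => ?_⟩
      rw [hbip k hk]
      exact ip_le_osc H u k b hb
  · intro x _ hxL
    have key : ∀ k ∈ Finset.univ.filter (fun k => x ∈ H.e k),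
        H.w k * |β k x| *
          phiP p (sSup (u '' {z | z ∈ H.e k ∧ z ∈ Dset H p L u}) +
                  sInf (u '' {z | z ∈ H.e k ∧ z ∈ Dset H p L u}) - 2 * u x)
        = -((H.w k * osc H u k ^ (p - 1)) * β k x) := by
      intro k hk
      rw [Finset.mem_filter] at hk
      rcases eq_or_lt_of_le (osc_nonneg H u k) with hosc | hosc
      · rw [hb0 k hosc.symm]
        simp
      · obtain ⟨a, hak, haM, haD⟩ := exists_argmax_in_Dset H hp hu k hosc
        obtain ⟨b, hbk, hbM, hbD⟩ := exists_argmin_in_Dset H hp hu k hosc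
        set Ms := (H.e k).sup' (H.e_nonempty k) u with hMs
        set mi := (H.e k).inf' (H.e_nonempty k) u with hmi
        have hoscMs : osc H u k = Ms - mi := osc_eq_sup_sub_inf H u k
        have hMspos : 0 < Ms - mi := by rw [← hoscMs]; exact hosc
        have hfin : (u '' {z | z ∈ H.e k ∧ z ∈ Dset H p L u}).Finite := Set.toFinite _
        have hne : (u '' {z | z ∈ H.e k ∧ z ∈ Dset H p L u}).Nonempty :=
          ⟨u a, ⟨a, ⟨hak, haD⟩, rfl⟩⟩
        have hsup : sSup (u '' {z | z ∈ H.e k ∧ z ∈ Dset H p L u}) = Ms := by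
          apply le_antisymm
          · apply csSup_le hne
            rintro r ⟨z, ⟨hz1, _⟩, rfl⟩
            exact Finset.le_sup' u hz1
          · exact le_csSup hfin.bddAbove ⟨a, ⟨hak, haD⟩, haM⟩
        have hinf : sInf (u '' {z | z ∈ H.e k ∧ z ∈ Dset H p L u}) = mi := by
          apply le_antisymm
          · exact csInf_le hfin.bddBelow ⟨b, ⟨hbk, hbD⟩, hbM⟩
          · apply le_csInf hne
            rintro r ⟨z, ⟨hz1, _⟩, rfl⟩
            exact Finset.inf'_le u hz1
        rw [hsup, hinf]
        have hrpow : (Ms - mi) ^ (p-2) * (Ms - mi) = (Ms - mi) ^ (p-1) := by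
          calc (Ms - mi) ^ (p-2) * (Ms - mi)
              = (Ms - mi) ^ (p-2) * (Ms - mi) ^ (1:ℝ) := by rw [Real.rpow_one]
            _ = (Ms - mi) ^ (p-2+1) := (Real.rpow_add hMspos _ _).symm
            _ = (Ms - mi) ^ (p-1) := by rw [show p-2+1 = p-1 by ring]
        by_cases hxmax : x ∈ amaxSet H u k
        · have hux : u x = Ms := (Finset.mem_filter.mp hxmax).2
          have harg : Ms + mi - 2 * u x = -(Ms - mi) := by rw [hux]; ring
          rw [harg]
          have hphi : phiP p (-(Ms - mi)) = -((Ms - mi) ^ (p-1)) := by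
            unfold phiP
            rw [if_neg (by intro h; rw [neg_eq_zero] at h; linarith)]
            rw [abs_neg, abs_of_pos hMspos, mul_neg]
            rw [hrpow]
          rw [hphi]
          have hbx := hbmax k x hosc hxmax
          rw [abs_of_nonneg hbx, hoscMs]
          ring
        · by_cases hxmin : x ∈ aminSet H u k
          · have hux : u x = mi := (Finset.mem_filter.mp hxmin).2
            have harg : Ms + mi - 2 * u x = Ms - mi := by rw [hux]; ring
            rw [harg]
            have hphi : phiP p (Ms - mi) = (Ms - mi) ^ (p-1) := by
              unfold phiP
              rw [if_neg (by intro h; linarith)]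
              rw [abs_of_pos hMspos, hrpow]
            rw [hphi]
            have hbx := hbmin k x hosc hxmin
            rw [abs_of_nonpos hbx, hoscMs]
            ring
          · have hbx : β k x = 0 := hbsupp k x hosc hxmax hxmin
            rw [hbx]
            simp
    rw [Finset.sum_congr rfl key, Finset.sum_neg_distrib]
    have hext : ∑ k ∈ Finset.univ.filter (fun k => x ∈ H.e k),
        (H.w k * osc H u k ^ (p - 1)) * β k x
        = ∑ k : Fin m, (H.w k * osc H u k ^ (p - 1)) * β k x := by
      apply Finset.sum_subset (Finset.filter_subset _ _)
      intro k _ hk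
      rw [Finset.mem_filter] at hk
      push_neg at hk
      have hxk : x ∉ H.e k := hk (Finset.mem_univ k)
      rcases eq_or_lt_of_le (osc_nonneg H u k) with hosc | hosc
      · rw [hb0 k hosc.symm]
        simp
      · have hzx : β k x = 0 := by
          apply hbsupp k x hosc
          · intro hc
            exact hxk (Finset.mem_filter.mp hc).1
          · intro hc
            exact hxk (Finset.mem_filter.mp hc).1
        rw [hzx, mul_zero]
    rw [hext, hbal x hxL, neg_zero]
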